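/- Let g : ℕ → ℂ be multiplicative with g(p) = 0 for every prime p and |g(p^k)| ≤ 2 for every prime p and every integer k ≥ 2. Then for every real σ with 1/2 < σ < 1, the series Σ_{n=1}^{∞} |g(n)| n^{−σ} converges and satisfies Σ_{n=1}^{∞} |g(n)| n^{−σ} ≤ ζ(2σ)² ζ(3σ)², where ζ is the Riemann zeta function. -/

import Mathlib

/-- The Riemann zeta function for real `s > 1`: `ζ(s) = ∑_{n=1}^∞ n^{-s}`. -/
noncomputable def zetaReal (s : ℝ) : ℝ := ∑' n : ℕ, ((n : ℝ) + 1) ^ (-s)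

namespace MSZB

def Phi (t : ℕ × ℕ × ℕ × ℕ) : ℕ :=
  (t.1 + 1) ^ 2 * (t.2.1 + 1) ^ 2 * (t.2.2.1 + 1) ^ 3 * (t.2.2.2 + 1) ^ 3

def ea (e : ℕ) : ℕ := if Even e then e / 2 else (e - 3) / 2
def ec (e : ℕ) : ℕ := if Even e then 0 else 1

lemma two_ea_add_three_ec {e : ℕ} (he : 2 ≤ e) : 2 * ea e + 3 * ec e = e := by
  rcases Nat.even_or_odd e with h | h
  · obtain ⟨k, hk⟩ := h
    have : Even e := ⟨k, hk⟩
    simp only [ea, ec, if_pos this]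
    omega
  · have h2 : ¬ Even e := Nat.not_even_iff_odd.2 h
    obtain ⟨k, hk⟩ := h
    simp only [ea, ec, if_neg h2]
    omega

lemma ea_pos_of_even {e : ℕ} (he : 2 ≤ e) (h : Even e) : 0 < ea e := by
  simp only [ea, if_pos h]
  exact Nat.div_pos he (by norm_num)

variable (n : ℕ)

def PA (S : Finset ℕ) : ℕ := ∏ p ∈ S, p ^ ea (n.factorization p)
def PC (S : Finset ℕ) : ℕ := ∏ p ∈ S, p ^ ec (n.factorization p)

lemma PA_pos {S : Finset ℕ} (hS : S ⊆ n.primeFactors) : 0 < PA n S :=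
  Finset.prod_pos fun q hq => pow_pos (Nat.prime_of_mem_primeFactors (hS hq)).pos _

lemma PC_pos {S : Finset ℕ} (hS : S ⊆ n.primeFactors) : 0 < PC n S :=
  Finset.prod_pos fun q hq => pow_pos (Nat.prime_of_mem_primeFactors (hS hq)).pos _

lemma prodAC {S : Finset ℕ} (hS : S ⊆ n.primeFactors)
    (h2 : ∀ p ∈ n.primeFactors, 2 ≤ n.factorization p) :
    PA n S ^ 2 * PC n S ^ 3 = ∏ p ∈ S, p ^ (n.factorization p) := by
  rw [PA, PC, ← Finset.prod_pow, ← Finset.prod_pow, ← Finset.prod_mul_distrib]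
  refine Finset.prod_congr rfl fun p hp => ?_
  rw [← pow_mul, ← pow_mul, ← pow_add, mul_comm (ea _) 2, mul_comm (ec _) 3,
    two_ea_add_three_ec (h2 p (hS hp))]

lemma mem_iff_dvd {S : Finset ℕ} (hS : S ⊆ n.primeFactors)
    (h2 : ∀ p ∈ n.primeFactors, 2 ≤ n.factorization p) {p : ℕ} (hp : p.Prime) :
    p ∈ S ↔ p ∣ PA n S * PC n S := by
  constructor
  · intro hpS
    rcases Nat.even_or_odd (n.factorization p) with h | h
    · refine Dvd.dvd.mul_right ?_ _
      refine dvd_trans (dvd_pow_self p ?_) (Finset.dvd_prod_of_mem _ hpS)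
      exact (ea_pos_of_even (h2 p (hS hpS)) h).ne'
    · refine Dvd.dvd.mul_left ?_ _
      refine dvd_trans (dvd_pow_self p ?_) (Finset.dvd_prod_of_mem _ hpS)
      simp [ec, Nat.not_even_iff_odd.2 h]
  · intro hdvd
    by_contra hpS
    rcases (Nat.Prime.dvd_mul hp).1 hdvd with h | h
    all_goals {
      obtain ⟨q, hq, hdq⟩ := hp.prime.exists_mem_finset_dvd h
      have hq' : q.Prime := Nat.prime_of_mem_primeFactors (hS hq)
      have : p = q := by
        have := hp.dvd_of_dvd_pow hdq
        exact ((Nat.prime_dvd_prime_iff_eq hp hq').1 this)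
      exact hpS (this ▸ hq) }

lemma key (hn : n ≠ 0) (h2 : ∀ p ∈ n.primeFactors, 2 ≤ n.factorization p) :
    ∃ ι : Finset ℕ → ℕ × ℕ × ℕ × ℕ,
      (∀ S ⊆ n.primeFactors, Phi (ι S) = n) ∧
      (∀ S ⊆ n.primeFactors, ∀ T ⊆ n.primeFactors, ι S = ι T → S = T) := by
  classical
  set P := n.primeFactors with hP
  refine ⟨fun S => (PA n S - 1, PA n (P \ S) - 1, PC n S - 1, PC n (P \ S) - 1), ?_, ?_⟩
  · intro S hS
    have hS' : P \ S ⊆ P := Finset.sdiff_subset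
    have h1 := PA_pos n hS
    have h2' := PA_pos n hS'
    have h3 := PC_pos n hS
    have h4 := PC_pos n hS'
    simp only [Phi]
    rw [Nat.sub_add_cancel h1, Nat.sub_add_cancel h2', Nat.sub_add_cancel h3,
      Nat.sub_add_cancel h4]
    have : PA n S ^ 2 * PA n (P \ S) ^ 2 * PC n S ^ 3 * PC n (P \ S) ^ 3
        = (PA n S ^ 2 * PC n S ^ 3) * (PA n (P \ S) ^ 2 * PC n (P \ S) ^ 3) := by ring
    rw [this, prodAC n hS h2, prodAC n hS' h2, mul_comm, Finset.prod_sdiff hS]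
    conv_rhs => rw [← Nat.factorization_prod_pow_eq_self hn]
    rfl
  · intro S hS T hT hEq
    simp only [Prod.mk.injEq] at hEq
    obtain ⟨e1, _, e3, _⟩ := hEq
    have hA : PA n S = PA n T := by
      have := PA_pos n hS; have := PA_pos n hT; omega
    have hC : PC n S = PC n T := by
      have := PC_pos n hS; have := PC_pos n hT; omega
    ext p
    by_cases hp : p ∈ P
    · have hpp := Nat.prime_of_mem_primeFactors hp
      rw [mem_iff_dvd n hS h2 hpp, mem_iff_dvd n hT h2 hpp, hA, hC]
    · constructor <;> intro h
      · exact absurd (hS h) hp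
      · exact absurd (hT h) hp

lemma pow_rpow_help (x : ℝ) (hx : 0 ≤ x) (k : ℕ) (σ : ℝ) :
    (x ^ k) ^ (-σ) = x ^ (-((k : ℝ) * σ)) := by
  rw [← Real.rpow_natCast x k, ← Real.rpow_mul hx]
  ring_nf

lemma W_eq (σ : ℝ) (t : ℕ × ℕ × ℕ × ℕ) :
    ((Phi t : ℝ)) ^ (-σ) =
      ((t.1 : ℝ) + 1) ^ (-(2 * σ)) * (((t.2.1 : ℝ) + 1) ^ (-(2 * σ)) *
      (((t.2.2.1 : ℝ) + 1) ^ (-(3 * σ)) * ((t.2.2.2 : ℝ) + 1) ^ (-(3 * σ)))) := by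
  obtain ⟨a, b, c, d⟩ := t
  simp only [Phi]
  push_cast
  rw [Real.mul_rpow (by positivity) (by positivity),
      Real.mul_rpow (by positivity) (by positivity),
      Real.mul_rpow (by positivity) (by positivity),
      pow_rpow_help _ (by positivity), pow_rpow_help _ (by positivity),
      pow_rpow_help _ (by positivity), pow_rpow_help _ (by positivity)]
  push_cast
  ring

lemma summable_shift (s : ℝ) (hs : 1 < s) : Summable (fun n : ℕ => ((n : ℝ) + 1) ^ (-s)) := by
  have h := Real.summable_nat_rpow (p := -s) |>.2 (by linarith)
  have h2 := (summable_nat_add_iff 1).2 h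
  refine h2.congr fun n => ?_
  push_cast
  rfl

lemma zetaRealNonneg (s : ℝ) : 0 ≤ ∑' n : ℕ, ((n : ℝ) + 1) ^ (-s) :=
  tsum_nonneg fun n => Real.rpow_nonneg (by positivity) _

lemma ennreal_zeta (s : ℝ) (hs : 1 < s) :
    ∑' n : ℕ, ENNReal.ofReal (((n : ℝ) + 1) ^ (-s)) =
      ENNReal.ofReal (∑' n : ℕ, ((n : ℝ) + 1) ^ (-s)) :=
  (ENNReal.ofReal_tsum_of_nonneg (fun n => Real.rpow_nonneg (by positivity) _)
    (summable_shift s hs)).symm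

lemma tsum_W (σ : ℝ) (h2σ : 1 < 2 * σ) (h3σ : 1 < 3 * σ) :
    ∑' t : ℕ × ℕ × ℕ × ℕ, ENNReal.ofReal ((Phi t : ℝ) ^ (-σ)) =
      ENNReal.ofReal ((∑' n : ℕ, ((n : ℝ) + 1) ^ (-(2 * σ))) ^ 2 *
        (∑' n : ℕ, ((n : ℝ) + 1) ^ (-(3 * σ))) ^ 2) := by
  have hrw : ∀ t : ℕ × ℕ × ℕ × ℕ, ENNReal.ofReal ((Phi t : ℝ) ^ (-σ)) =
      ENNReal.ofReal (((t.1 : ℝ) + 1) ^ (-(2 * σ))) *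
      (ENNReal.ofReal (((t.2.1 : ℝ) + 1) ^ (-(2 * σ))) *
      (ENNReal.ofReal (((t.2.2.1 : ℝ) + 1) ^ (-(3 * σ))) *
       ENNReal.ofReal (((t.2.2.2 : ℝ) + 1) ^ (-(3 * σ))))) := by
    intro t
    rw [W_eq σ t, ENNReal.ofReal_mul (by positivity), ENNReal.ofReal_mul (by positivity),
      ENNReal.ofReal_mul (by positivity)]
  simp only [hrw]
  rw [ENNReal.tsum_prod']
  simp only [ENNReal.tsum_mul_left]
  rw [ENNReal.tsum_prod']
  simp only [ENNReal.tsum_mul_left]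
  rw [ENNReal.tsum_prod']
  simp only [ENNReal.tsum_mul_left, ENNReal.tsum_mul_right]
  rw [ennreal_zeta _ h2σ, ennreal_zeta _ h3σ]
  rw [← ENNReal.ofReal_mul (zetaRealNonneg _)]
  rw [← ENNReal.ofReal_mul (zetaRealNonneg _)]
  rw [← ENNReal.ofReal_mul (zetaRealNonneg _)]
  congr 1
  ring

end MSZB

open scoped ENNReal NNReal

namespace MSZB

set_option maxHeartbeats 1000000 in
lemma stepB (g : ℕ → ℂ) (hg1 : g 1 = 1)
    (hmul : ∀ x y : ℕ, Nat.Coprime x y → g (x * y) = g x * g y)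
    (hgp : ∀ p : ℕ, p.Prime → g p = 0)
    (hgpk : ∀ p k : ℕ, p.Prime → 2 ≤ k → ‖g (p ^ k)‖ ≤ 2)
    (σ : ℝ) (hσ0 : 0 < σ) (n : ℕ) :
    ENNReal.ofReal (‖g n‖ * (n : ℝ) ^ (-σ)) ≤
      ∑' t : { t : ℕ × ℕ × ℕ × ℕ // Phi t = n }, ENNReal.ofReal ((Phi t.1 : ℝ) ^ (-σ)) := by
  classical
  rcases Nat.eq_zero_or_pos n with rfl | hn0
  · rw [show ((0 : ℕ) : ℝ) = 0 by norm_num, Real.zero_rpow (neg_ne_zero.2 hσ0.ne'),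
      mul_zero, ENNReal.ofReal_zero]
    exact zero_le
  have hn : n ≠ 0 := hn0.ne'
  by_cases hall : ∀ p ∈ n.primeFactors, 2 ≤ n.factorization p
  · obtain ⟨ι, hΦ, hinj⟩ := key n hn hall
    set m := n.primeFactors.card with hm
    have habs : ‖g n‖ ≤ 2 ^ m := by
      have hfac : ‖g n‖ =
          ∏ p ∈ n.factorization.support, ‖g (p ^ n.factorization p)‖ :=
        Nat.multiplicative_factorization (fun k => ‖g k‖)
          (fun x y h => by simp [hmul x y h]) (by simp [hg1]) hn
      rw [hfac]
      calc ∏ p ∈ n.factorization.support, ‖g (p ^ n.factorization p)‖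
          ≤ ∏ _p ∈ n.factorization.support, 2 := by
            refine Finset.prod_le_prod (fun _ _ => norm_nonneg _) fun p hp => ?_
            have hp' : p ∈ n.primeFactors := by rwa [← Nat.support_factorization]
            exact hgpk p _ (Nat.prime_of_mem_primeFactors hp') (hall p hp')
        _ = 2 ^ m := by
            rw [Finset.prod_const, Nat.support_factorization]
    set T : Finset { t : ℕ × ℕ × ℕ × ℕ // Phi t = n } :=
      n.primeFactors.powerset.attach.image
        (fun S => ⟨ι S.1, hΦ S.1 (Finset.mem_powerset.1 S.2)⟩) with hT
    have hTcard : T.card = 2 ^ m := by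
      rw [hT, Finset.card_image_of_injOn, Finset.card_attach, Finset.card_powerset]
      intro S hS S' hS' h
      have h' := congrArg Subtype.val h
      simp only at h'
      exact Subtype.ext (hinj S.1 (Finset.mem_powerset.1 S.2) S'.1
        (Finset.mem_powerset.1 S'.2) h')
    calc ENNReal.ofReal (‖g n‖ * (n : ℝ) ^ (-σ))
        ≤ (2 ^ m : ℝ≥0∞) * ENNReal.ofReal ((n : ℝ) ^ (-σ)) := by
          rw [ENNReal.ofReal_mul (norm_nonneg _)]
          refine mul_le_mul_left ?_ _
          calc ENNReal.ofReal (‖g n‖) ≤ ENNReal.ofReal ((2 : ℝ) ^ m) :=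
                ENNReal.ofReal_le_ofReal habs
            _ = (2 ^ m : ℝ≥0∞) := by
                rw [ENNReal.ofReal_pow (by norm_num)]
                norm_num
      _ = ∑ x ∈ T, ENNReal.ofReal ((Phi x.1 : ℝ) ^ (-σ)) := by
          rw [Finset.sum_congr rfl (fun x _ => by rw [x.2]), Finset.sum_const, hTcard]
          rw [nsmul_eq_mul]
          norm_num
      _ ≤ _ := ENNReal.sum_le_tsum T
  · push_neg at hall
    obtain ⟨p, hp, hlt⟩ := hall
    have hp1 : n.factorization p = 1 := by
      have h0 : n.factorization p ≠ 0 := by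
        rw [← Nat.support_factorization] at hp
        exact Finsupp.mem_support_iff.1 (by rwa [Nat.support_factorization])
      omega
    have hgn : g n = 0 := by
      have hfg : g n = ∏ q ∈ n.factorization.support, g (q ^ n.factorization q) :=
        Nat.multiplicative_factorization g hmul hg1 hn
      rw [hfg]
      refine Finset.prod_eq_zero (i := p) (by rwa [Nat.support_factorization]) ?_
      rw [hp1, pow_one]
      exact hgp p (Nat.prime_of_mem_primeFactors hp)
    rw [hgn]
    simp

end MSZB

open scoped ENNReal NNReal in
open MSZB in
theorem multiplicative_series_zeta_bound (g : ℕ → ℂ)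
    (hg1 : g 1 = 1)
    (hgmul : ∀ m n : ℕ, 0 < m → 0 < n → Nat.Coprime m n → g (m * n) = g m * g n)
    (hgp : ∀ p : ℕ, p.Prime → g p = 0)
    (hgpk : ∀ p k : ℕ, p.Prime → 2 ≤ k → ‖g (p ^ k)‖ ≤ 2) :
    ∀ σ : ℝ, 1 / 2 < σ → σ < 1 →
      Summable (fun n : ℕ => ‖g n‖ * (n : ℝ) ^ (-σ)) ∧
      ∑' n : ℕ, ‖g n‖ * (n : ℝ) ^ (-σ) ≤
        zetaReal (2 * σ) ^ 2 * zetaReal (3 * σ) ^ 2 := by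
  classical
  intro σ hσ2 hσ1
  have hσ0 : 0 < σ := by linarith
  have h2σ : 1 < 2 * σ := by linarith
  have h3σ : 1 < 3 * σ := by linarith
  have hmul : ∀ x y : ℕ, Nat.Coprime x y → g (x * y) = g x * g y := by
    intro x y hxy
    rcases Nat.eq_zero_or_pos x with rfl | hx
    · have : y = 1 := by simpa using hxy
      subst this; simp [hg1]
    rcases Nat.eq_zero_or_pos y with rfl | hy
    · have : x = 1 := by simpa [Nat.coprime_zero_right] using hxy
      subst this; simp [hg1]
    exact hgmul x y hx hy hxy
  have hf0 : ∀ n : ℕ, 0 ≤ ‖g n‖ * (n : ℝ) ^ (-σ) := fun n =>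
    mul_nonneg (norm_nonneg _) (Real.rpow_nonneg (Nat.cast_nonneg n) _)
  have hd : ∑' t : ℕ × ℕ × ℕ × ℕ, ENNReal.ofReal ((Phi t : ℝ) ^ (-σ)) =
      ∑' n : ℕ, ∑' t : { t : ℕ × ℕ × ℕ × ℕ // Phi t = n },
        ENNReal.ofReal ((Phi t.1 : ℝ) ^ (-σ)) := by
    rw [← (Equiv.sigmaFiberEquiv Phi).tsum_eq
      (fun t => ENNReal.ofReal ((Phi t : ℝ) ^ (-σ))), ENNReal.tsum_sigma']
    rfl
  have hRHS0 : 0 ≤ zetaReal (2 * σ) ^ 2 * zetaReal (3 * σ) ^ 2 := by positivity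
  have hB : ∑' n : ℕ, ENNReal.ofReal (‖g n‖ * (n : ℝ) ^ (-σ)) ≤
      ENNReal.ofReal (zetaReal (2 * σ) ^ 2 * zetaReal (3 * σ) ^ 2) := by
    calc ∑' n : ℕ, ENNReal.ofReal (‖g n‖ * (n : ℝ) ^ (-σ))
        ≤ ∑' n : ℕ, ∑' t : { t : ℕ × ℕ × ℕ × ℕ // Phi t = n },
            ENNReal.ofReal ((Phi t.1 : ℝ) ^ (-σ)) :=
          ENNReal.tsum_le_tsum (stepB g hg1 hmul hgp hgpk σ hσ0)
      _ = ∑' t : ℕ × ℕ × ℕ × ℕ, ENNReal.ofReal ((Phi t : ℝ) ^ (-σ)) := hd.symm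
      _ = ENNReal.ofReal (zetaReal (2 * σ) ^ 2 * zetaReal (3 * σ) ^ 2) :=
          tsum_W σ h2σ h3σ
  set f' : ℕ → ℝ≥0 := fun n => (‖g n‖ * (n : ℝ) ^ (-σ)).toNNReal with hf'
  have hne : (∑' n, ((f' n : ℝ≥0∞))) ≠ ⊤ :=
    (lt_of_le_of_lt hB ENNReal.ofReal_lt_top).ne
  have hsum' : Summable f' := ENNReal.tsum_coe_ne_top_iff_summable.1 hne
  have hsumf : Summable (fun n : ℕ => ‖g n‖ * (n : ℝ) ^ (-σ)) :=
    (NNReal.summable_coe.2 hsum').congr fun n => Real.coe_toNNReal _ (hf0 n)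
  refine ⟨hsumf, ?_⟩
  have h1 : ((∑' n, f' n : ℝ≥0) : ℝ≥0∞) =
      ∑' n, ENNReal.ofReal (‖g n‖ * (n : ℝ) ^ (-σ)) :=
    ENNReal.coe_tsum hsum'
  have h2 : ((∑' n, f' n : ℝ≥0) : ℝ≥0∞) ≤
      ENNReal.ofReal (zetaReal (2 * σ) ^ 2 * zetaReal (3 * σ) ^ 2) := h1 ▸ hB
  have h3 := ENNReal.toReal_mono ENNReal.ofReal_ne_top h2
  rw [ENNReal.coe_toReal, ENNReal.toReal_ofReal hRHS0] at h3
  calc ∑' n : ℕ, ‖g n‖ * (n : ℝ) ^ (-σ)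
      = ((∑' n, f' n : ℝ≥0) : ℝ) := by
        rw [NNReal.coe_tsum]
        exact tsum_congr fun n => (Real.coe_toNNReal _ (hf0 n)).symm
    _ ≤ _ := h3
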